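/- Let H be a real inner product space. For any a, b, c, s, t ∈ [0,1] with a ≤ s, and any points x₀, x₁, y₀, y₁, z₀, z₁ ∈ H, the following inequality holds: s·t·a·((1−t)(1−a) + (1−s)·t·b)·‖x₀−x₁‖² + s(1−t)t(1−b)b·‖y₀−y₁‖² + a·b(1−c)c·‖z₀−z₁‖² ≤ (1−s)t·a·b(1−c)·‖x₀−z₀‖² + s·t·a·b(1−c)·‖x₁−z₀‖² + (1−t)a·b(1−c)·‖y₁−z₀‖² + (1−s)t·a·b·c·‖x₀−z₁‖² + s·t·a·b·c·‖x₁−z₁‖² + (1−t)a·b·c·‖y₁−z₁‖² + s(1−t)t(1−a)(1−b)·‖x₀−y₀‖² + s(1−t)t·a(1−b)·‖x₁−y₀‖² + (1−t)t(s−a)b·‖x₀−y₁‖². -/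
import Mathlib

theorem six_point_ineq {H : Type*} [NormedAddCommGroup H] [InnerProductSpace ℝ H]
    (a b c s t : ℝ)
    (ha0 : 0 ≤ a) (hb0 : 0 ≤ b) (hb1 : b ≤ 1) (hc0 : 0 ≤ c) (hc1 : c ≤ 1)
    (has : a ≤ s) (hs1 : s ≤ 1) (ht0 : 0 ≤ t) (ht1 : t ≤ 1)
    (x₀ x₁ y₀ y₁ z₀ z₁ : H) :
    s * t * a * ((1 - t) * (1 - a) + (1 - s) * t * b) * ‖x₀ - x₁‖ ^ 2 +
        s * (1 - t) * t * (1 - b) * b * ‖y₀ - y₁‖ ^ 2 +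
        a * b * (1 - c) * c * ‖z₀ - z₁‖ ^ 2 ≤
      (1 - s) * t * a * b * (1 - c) * ‖x₀ - z₀‖ ^ 2 +
        s * t * a * b * (1 - c) * ‖x₁ - z₀‖ ^ 2 +
        (1 - t) * a * b * (1 - c) * ‖y₁ - z₀‖ ^ 2 +
        (1 - s) * t * a * b * c * ‖x₀ - z₁‖ ^ 2 +
        s * t * a * b * c * ‖x₁ - z₁‖ ^ 2 +
        (1 - t) * a * b * c * ‖y₁ - z₁‖ ^ 2 +
        s * (1 - t) * t * (1 - a) * (1 - b) * ‖x₀ - y₀‖ ^ 2 +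
        s * (1 - t) * t * a * (1 - b) * ‖x₁ - y₀‖ ^ 2 +
        (1 - t) * t * (s - a) * b * ‖x₀ - y₁‖ ^ 2 := by
  have key :
      (1 - s) * t * a * b * (1 - c) * ‖x₀ - z₀‖ ^ 2 +
        s * t * a * b * (1 - c) * ‖x₁ - z₀‖ ^ 2 +
        (1 - t) * a * b * (1 - c) * ‖y₁ - z₀‖ ^ 2 +
        (1 - s) * t * a * b * c * ‖x₀ - z₁‖ ^ 2 +
        s * t * a * b * c * ‖x₁ - z₁‖ ^ 2 +
        (1 - t) * a * b * c * ‖y₁ - z₁‖ ^ 2 +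
        s * (1 - t) * t * (1 - a) * (1 - b) * ‖x₀ - y₀‖ ^ 2 +
        s * (1 - t) * t * a * (1 - b) * ‖x₁ - y₀‖ ^ 2 +
        (1 - t) * t * (s - a) * b * ‖x₀ - y₁‖ ^ 2 =
      (s * t * a * ((1 - t) * (1 - a) + (1 - s) * t * b) * ‖x₀ - x₁‖ ^ 2 +
        s * (1 - t) * t * (1 - b) * b * ‖y₀ - y₁‖ ^ 2 +
        a * b * (1 - c) * c * ‖z₀ - z₁‖ ^ 2) +
      a * b * ‖((1 - s) * t) • x₀ + (s * t) • x₁ + (1 - t) • y₁ -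
          ((1 - c) • z₀ + c • z₁)‖ ^ 2 +
      s * t * (1 - t) * ‖(1 - a) • x₀ + a • x₁ - ((1 - b) • y₀ + b • y₁)‖ ^ 2 := by
    simp only [← real_inner_self_eq_norm_sq, inner_sub_left, inner_sub_right,
      inner_add_left, inner_add_right, real_inner_smul_left, real_inner_smul_right,
      real_inner_comm x₁ x₀, real_inner_comm y₀ x₀, real_inner_comm y₁ x₀,
      real_inner_comm z₀ x₀, real_inner_comm z₁ x₀, real_inner_comm y₀ x₁,
      real_inner_comm y₁ x₁, real_inner_comm z₀ x₁, real_inner_comm z₁ x₁,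
      real_inner_comm y₁ y₀, real_inner_comm z₀ y₀, real_inner_comm z₁ y₀,
      real_inner_comm z₀ y₁, real_inner_comm z₁ y₁, real_inner_comm z₁ z₀]
    ring
  rw [key]
  have h1 : 0 ≤ a * b * ‖((1 - s) * t) • x₀ + (s * t) • x₁ + (1 - t) • y₁ -
      ((1 - c) • z₀ + c • z₁)‖ ^ 2 :=
    mul_nonneg (mul_nonneg ha0 hb0) (sq_nonneg _)
  have h2 : 0 ≤ s * t * (1 - t) * ‖(1 - a) • x₀ + a • x₁ - ((1 - b) • y₀ + b • y₁)‖ ^ 2 :=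
    mul_nonneg (mul_nonneg (mul_nonneg (ha0.trans has) ht0) (by linarith)) (sq_nonneg _)
  linarith
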